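/- Matrix-tree theorem: for an undirected graph G with Laplacian L, deleting the row and column corresponding to any fixed vertex v yields a matrix L_v whose determinant equals the number of spanning trees of G. -/

import Mathlib

open SimpleGraph Finset Matrix Equiv

namespace MTT

set_option linter.unusedSectionVars false
set_option linter.unusedVariables false
set_option linter.unreachableTactic false
set_option linter.unusedTactic false
set_option maxHeartbeats 1600000

section Pairs


set_option linter.unusedSectionVars false

variable {V : Type*} [DecidableEq V]

/-- First endpoint of a chosen representative of an unordered pair. -/
noncomputable def efst (e : Sym2 V) : V := e.out.1
/-- Second endpoint of a chosen representative of an unordered pair. -/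
noncomputable def esnd (e : Sym2 V) : V := e.out.2

lemma mk_ends (e : Sym2 V) : s(efst e, esnd e) = e := e.out_eq

lemma ends_ne {e : Sym2 V} (he : ¬ e.IsDiag) : efst e ≠ esnd e := by
  intro h
  apply he
  rw [← mk_ends e, h]
  exact Sym2.isDiag_iff_proj_eq |>.mpr rfl

lemma mem_iff_ends {e : Sym2 V} {w : V} : w ∈ e ↔ w = efst e ∨ w = esnd e := by
  conv_lhs => rw [← mk_ends e]
  exact Sym2.mem_iff

/-- Signed incidence of a vertex in an (oriented) unordered pair. -/
noncomputable def inc (e : Sym2 V) (w : V) : ℤ :=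
  (if w = efst e then 1 else 0) - (if w = esnd e then 1 else 0)

lemma inc_eq_zero_of_not_mem {e : Sym2 V} {w : V} (h : w ∉ e) : inc e w = 0 := by
  rw [mem_iff_ends] at h
  push_neg at h
  simp [inc, h.1, h.2]

lemma inc_sq {e : Sym2 V} (he : ¬ e.IsDiag) (w : V) :
    inc e w * inc e w = if w ∈ e then 1 else 0 := by
  have hne := ends_ne he
  simp only [mem_iff_ends, inc]
  by_cases h1 : w = efst e <;> by_cases h2 : w = esnd e <;>
    simp_all

lemma inc_mul_inc {e : Sym2 V} (he : ¬ e.IsDiag) {w w' : V} (hww' : w ≠ w') :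
    inc e w * inc e w' = -(if e = s(w, w') then 1 else 0) := by
  have hne := ends_ne he
  by_cases h : e = s(w, w')
  · subst h
    simp only [if_pos rfl]
    have h2 : s(efst s(w,w'), esnd s(w,w')) = s(w, w') := mk_ends _
    rw [Sym2.eq_iff] at h2
    rcases h2 with ⟨ha, hb⟩ | ⟨ha, hb⟩ <;> simp [inc, ha, hb, hww', hww'.symm]
  · simp only [if_neg h, neg_zero]
    rcases eq_or_ne (inc e w) 0 with h0 | h0
    · rw [h0, zero_mul]
    rcases eq_or_ne (inc e w') 0 with h0' | h0'
    · rw [h0', mul_zero]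
    exfalso
    have hw : w ∈ e := by by_contra hc; exact h0 (inc_eq_zero_of_not_mem hc)
    have hw' : w' ∈ e := by by_contra hc; exact h0' (inc_eq_zero_of_not_mem hc)
    rw [mem_iff_ends] at hw hw'
    apply h
    rw [← mk_ends e]
    rcases hw with rfl | rfl <;> rcases hw' with rfl | rfl <;> first
      | exact absurd rfl hww'
      | rfl
      | exact Sym2.eq_swap


end Pairs

section Reach


set_option linter.unusedSectionVars false

variable {V : Type*}

open Classical in
/-- Indicator of reachability. -/
noncomputable def reachInd (H : SimpleGraph V) (a x : V) : ℤ :=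
  if H.Reachable a x then 1 else 0

lemma reachInd_pos {H : SimpleGraph V} {a x : V} (h : H.Reachable a x) : reachInd H a x = 1 := by
  rw [reachInd, if_pos h]

lemma reachInd_neg {H : SimpleGraph V} {a x : V} (h : ¬ H.Reachable a x) : reachInd H a x = 0 := by
  rw [reachInd, if_neg h]

lemma reach_or_reach_of_preconnected {H : SimpleGraph V} (hc : H.Preconnected)
    {a c : V} (h : H.Adj a c) (x : V) :
    (H.deleteEdges {s(a,c)}).Reachable a x ∨ (H.deleteEdges {s(a,c)}).Reachable c x := by
  have main : ∀ {y x : V}, H.Walk y x →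
      ((H.deleteEdges {s(a,c)}).Reachable a y ∨ (H.deleteEdges {s(a,c)}).Reachable c y) →
      ((H.deleteEdges {s(a,c)}).Reachable a x ∨ (H.deleteEdges {s(a,c)}).Reachable c x) := by
    intro y x q
    induction q with
    | nil => exact id
    | cons hadj q ih =>
      rename_i y' z' x'
      intro hbase
      apply ih
      by_cases he : s(y', z') = s(a, c)
      · rw [Sym2.eq_iff] at he
        rcases he with ⟨rfl, rfl⟩ | ⟨rfl, rfl⟩
        · right; exact Reachable.refl _
        · left; exact Reachable.refl _
      · have hadj' : (H.deleteEdges {s(a,c)}).Adj y' z' :=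
          SimpleGraph.deleteEdges_adj.mpr ⟨hadj, by simpa using he⟩
        rcases hbase with hb | hb
        · left; exact hb.trans hadj'.reachable
        · right; exact hb.trans hadj'.reachable
  exact main (hc a x).some (Or.inl (Reachable.refl _))

lemma not_reach_of_acyclic {H : SimpleGraph V} (ha : H.IsAcyclic) {a c : V} (h : H.Adj a c) :
    ¬ (H.deleteEdges {s(a,c)}).Reachable a c := by
  have hb := (isAcyclic_iff_forall_adj_isBridge.mp ha) h
  rw [isBridge_iff] at hb
  exact hb

lemma reachInd_add_reachInd {H : SimpleGraph V} (hT : H.IsTree) {a c : V} (h : H.Adj a c)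
    (x : V) :
    reachInd (H.deleteEdges {s(a,c)}) a x + reachInd (H.deleteEdges {s(a,c)}) c x = 1 := by
  rcases reach_or_reach_of_preconnected hT.isConnected.preconnected h x with hr | hr
  · rw [reachInd_pos hr, reachInd_neg, add_zero]
    intro hr'
    exact not_reach_of_acyclic hT.IsAcyclic h (hr.trans hr'.symm)
  · rw [reachInd_pos hr, reachInd_neg, zero_add]
    intro hr'
    exact not_reach_of_acyclic hT.IsAcyclic h (hr'.trans hr.symm)

variable [Fintype V] [DecidableEq V]

lemma star_sum {H : SimpleGraph V} [DecidableRel H.Adj] (hT : H.IsTree) (w x : V) :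
    ∑ u ∈ H.neighborFinset w, reachInd (H.deleteEdges {s(w,u)}) u x
      = if x = w then 0 else 1 := by
  rcases eq_or_ne x w with rfl | hxw
  · rw [if_pos rfl]
    refine Finset.sum_eq_zero fun u hu => ?_
    rw [mem_neighborFinset] at hu
    refine reachInd_neg fun hr => ?_
    exact not_reach_of_acyclic hT.IsAcyclic hu hr.symm
  · rw [if_neg hxw]
    obtain ⟨p, hp, -⟩ := hT.existsUnique_path w x
    cases p with
    | nil => exact absurd rfl hxw
    | cons hadj q =>
      rename_i u₀
      rw [SimpleGraph.Walk.cons_isPath_iff] at hp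
      obtain ⟨hq, hwq⟩ := hp
      refine Finset.sum_eq_single_of_mem u₀ (by rwa [mem_neighborFinset]) ?_ |>.trans ?_
      · -- other neighbors contribute 0
        intro u hu hne
        rw [mem_neighborFinset] at hu
        refine reachInd_neg fun hr => ?_
        have hq' : (H.deleteEdges {s(w,u)}).Reachable u₀ x := by
          refine (q.toDeleteEdges {s(w,u)} fun e he => ?_).reachable
          intro hmem
          rw [Set.mem_singleton_iff] at hmem
          subst hmem
          exact hwq (SimpleGraph.Walk.fst_mem_support_of_mem_edges q he)
        have hadj' : (H.deleteEdges {s(w,u)}).Adj w u₀ := by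
          refine SimpleGraph.deleteEdges_adj.mpr ⟨hadj, ?_⟩
          simp only [Set.mem_singleton_iff, Sym2.eq_iff]
          push_neg
          exact ⟨fun _ => hne.symm, fun h' => absurd h'.symm hu.ne'⟩
        exact not_reach_of_acyclic hT.IsAcyclic hu
          (hadj'.reachable.trans (hq'.trans hr.symm))
      · -- the neighbor along the path contributes 1
        refine reachInd_pos ?_
        refine (q.toDeleteEdges {s(w,u₀)} fun e he => ?_).reachable
        intro hmem
        rw [Set.mem_singleton_iff] at hmem
        subst hmem
        exact hwq (SimpleGraph.Walk.fst_mem_support_of_mem_edges q he)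


end Reach

section CauchyBinet


set_option linter.unusedSectionVars false
set_option maxHeartbeats 800000

variable {W E R : Type*} [Fintype W] [DecidableEq W] [Fintype E] [DecidableEq E] [CommRing R]

lemma det_mul_expand (A : Matrix W E R) (B : Matrix E W R) :
    det (A * B) = ∑ p : W → E, (∏ w, B (p w) w) * det (A.submatrix id p) :=
  calc
    det (A * B) = ∑ p : W → E, ∑ σ : Perm W,
        ((Perm.sign σ : ℤ) : R) * ∏ w, A (σ w) (p w) * B (p w) w := by
      simp only [det_apply', mul_apply, prod_univ_sum, mul_sum, Fintype.piFinset_univ]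
      rw [Finset.sum_comm]
    _ = ∑ p : W → E, (∏ w, B (p w) w) * det (A.submatrix id p) := by
      refine sum_congr rfl fun p _ => ?_
      rw [det_apply', mul_sum]
      refine sum_congr rfl fun σ _ => ?_
      simp only [prod_mul_distrib, submatrix_apply, id_eq]
      ring

lemma det_mul_expand_inj (A : Matrix W E R) (B : Matrix E W R) :
    det (A * B) = ∑ p ∈ univ.filter (fun p : W → E => Function.Injective p),
      (∏ w, B (p w) w) * det (A.submatrix id p) := by
  rw [det_mul_expand]
  refine (sum_subset (filter_subset _ _) fun p _ hp => ?_).symm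
  simp only [mem_filter, mem_univ, true_and] at hp
  rw [Function.not_injective_iff] at hp
  obtain ⟨a, b, hab, hne⟩ := hp
  rw [det_zero_of_column_eq hne fun k => by
    rw [submatrix_apply, submatrix_apply, hab], mul_zero]

/-- Canonical enumeration of a finset of the right size. -/
noncomputable def enum (S : Finset E) (h : Fintype.card W = S.card) : W → E :=
  fun w => ((Fintype.equivOfCardEq (h.trans (Fintype.card_coe S).symm) : W ≃ {x // x ∈ S}) w : E)

lemma enum_injective (S : Finset E) (h : Fintype.card W = S.card) :
    Function.Injective (enum (W := W) S h) := fun a b hab => by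
  apply (Fintype.equivOfCardEq (h.trans (Fintype.card_coe S).symm)).injective
  exact Subtype.ext hab

lemma enum_mem (S : Finset E) (h : Fintype.card W = S.card) (w : W) : enum S h w ∈ S :=
  ((Fintype.equivOfCardEq (h.trans (Fintype.card_coe S).symm) : W ≃ {x // x ∈ S}) w).2

lemma enum_image (S : Finset E) (h : Fintype.card W = S.card) :
    (univ : Finset W).image (enum S h) = S := by
  apply eq_of_subset_of_card_le
  · intro x hx
    simp only [mem_image] at hx
    obtain ⟨w, _, rfl⟩ := hx
    exact enum_mem S h w
  · rw [card_image_of_injective _ (enum_injective S h), card_univ, ← h]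

theorem det_mul_transpose_expand (A : Matrix W E R) :
    det (A * Aᵀ) = ∑ S ∈ powersetCard (Fintype.card W) (univ : Finset E),
      if h : Fintype.card W = S.card then (det (A.submatrix id (enum S h)))^2 else 0 := by
  rw [det_mul_expand_inj]
  rw [← Finset.sum_fiberwise_of_maps_to (g := fun p : W → E => (univ : Finset W).image p)
      (t := powersetCard (Fintype.card W) (univ : Finset E)) (fun p hp => by
        simp only [mem_filter, mem_univ, true_and] at hp
        rw [mem_powersetCard_univ, card_image_of_injective _ hp, card_univ])]
  refine sum_congr rfl fun S hS => ?_
  have hcard : Fintype.card W = S.card := by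
    rw [mem_powersetCard_univ] at hS; exact hS.symm
  rw [dif_pos hcard]
  set eS := (Fintype.equivOfCardEq (hcard.trans (Fintype.card_coe S).symm) : W ≃ {x // x ∈ S})
    with heS
  have hfeS : ∀ w, enum (W := W) S hcard w = (eS w : E) := fun _ => rfl
  have key : ∑ σ : Perm W,
      ((∏ w, Aᵀ ((enum S hcard ∘ σ) w) w) * det (A.submatrix id (enum S hcard ∘ σ)))
      = ∑ p ∈ (univ.filter (fun p : W → E => Function.Injective p)).filter
          (fun p => (univ : Finset W).image p = S),
        (∏ w, Aᵀ (p w) w) * det (A.submatrix id p) := by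
    refine Finset.sum_bij' (i := fun (σ : Perm W) (_ : σ ∈ univ) => enum S hcard ∘ σ)
      (j := fun p hp => ?_) ?_ ?_ ?_ ?_ ?_
    · -- construct the permutation from p
      refine Equiv.ofBijective (fun w => eS.symm ⟨p w, ?_⟩)
        (Finite.injective_iff_bijective.1 fun a b hab => ?_)
      · have hp2 : (univ : Finset W).image p = S := (mem_filter.mp hp).2
        rw [← hp2]; exact mem_image_of_mem _ (mem_univ w)
      · have hp1 : Function.Injective p :=
          (mem_filter.mp (mem_filter.mp hp).1).2
        exact hp1 (congrArg Subtype.val (eS.symm.injective hab))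
    · intro σ _
      simp only [mem_filter, mem_univ, true_and]
      refine ⟨(enum_injective S hcard).comp σ.injective, ?_⟩
      rw [← Finset.image_image, Finset.image_univ_of_surjective σ.surjective, enum_image]
    · intro p hp; exact mem_univ _
    · intro σ _
      ext w
      simp [hfeS]
    · intro p hp
      funext w
      simp [hfeS]
    · intro σ _; rfl
  rw [← key]
  calc ∑ σ : Perm W, ((∏ w, Aᵀ ((enum S hcard ∘ σ) w) w) * det (A.submatrix id (enum S hcard ∘ σ)))
      = ∑ σ : Perm W, ((Perm.sign σ : ℤ) : R) * (∏ w, A w (enum S hcard (σ w))) *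
          det (A.submatrix id (enum S hcard)) := by
        refine sum_congr rfl fun σ _ => ?_
        rw [show A.submatrix id (enum S hcard ∘ σ) = (A.submatrix id (enum S hcard)).submatrix id σ
          from rfl, det_permute']
        simp only [transpose_apply, Function.comp_apply]
        push_cast
        ring
    _ = det (A.submatrix id (enum S hcard)) ^ 2 := by
        rw [← sum_mul, sq]
        congr 1
        rw [← det_transpose (A.submatrix id (enum S hcard)), det_apply']
        exact sum_congr rfl fun σ _ => by simp only [transpose_apply, submatrix_apply, id_eq]


end CauchyBinet

section Core
variable {V : Type*} [DecidableEq V] [Fintype V]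

set_option linter.unusedSectionVars false




section Incidence

variable {ι : Type*} [Fintype ι] [DecidableEq ι]

/-- Incidence matrix (rows: vertices other than `v`, columns: edge indices). -/
noncomputable def imat (v : V) (b : ι → Sym2 V) : Matrix {w : V // w ≠ v} ι ℤ :=
  Matrix.of fun w i => inc (b i) (w : V)

variable (H : SimpleGraph V) (v : V) (b : ι → Sym2 V)

theorem det_imat_sq_of_isTree (b : {w : V // w ≠ v} → Sym2 V) (hb : Function.Injective b)
    (hmem : ∀ i, b i ∈ H.edgeSet) (hsurj : ∀ e ∈ H.edgeSet, ∃ i, b i = e)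
    (hT : H.IsTree) : (det (imat v b))^2 = 1 := by
  classical
  have hadj_ends : ∀ i, H.Adj (efst (b i)) (esnd (b i)) := fun i => by
    rw [← mem_edgeSet, mk_ends]; exact hmem i
  have hnd : ∀ i, ¬ (b i).IsDiag := fun i => not_isDiag_of_mem_edgeSet H (hmem i)
  set M : Matrix {w : V // w ≠ v} {w : V // w ≠ v} ℤ := Matrix.of fun i w =>
    reachInd (H.deleteEdges {b i}) (esnd (b i)) (w : V)
      - reachInd (H.deleteEdges {b i}) (esnd (b i)) v with hM
  have hAM : imat v b * M = -1 := by
    ext w w'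
    rw [mul_apply]
    have step1 : ∑ i, imat v b w i * M i w'
        = ∑ i ∈ univ.filter (fun i => (w : V) ∈ b i), imat v b w i * M i w' := by
      refine (Finset.sum_filter_of_ne fun i _ hne => ?_).symm
      by_contra hmemw
      exact hne (by rw [show imat v b w i = 0 from inc_eq_zero_of_not_mem hmemw, zero_mul])
    have step2 : ∑ i ∈ univ.filter (fun i => (w : V) ∈ b i), imat v b w i * M i w'
        = ∑ u ∈ H.neighborFinset (w : V),
            (reachInd (H.deleteEdges {s((w : V), u)}) u (w' : V)
              - reachInd (H.deleteEdges {s((w : V), u)}) u v) := by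
      refine Finset.sum_bij'
        (fun i _ => if (w : V) = efst (b i) then esnd (b i) else efst (b i))
        (fun u hu => Classical.choose (hsurj s((w : V), u)
          (by rw [mem_edgeSet]; exact (mem_neighborFinset _ _ _).mp hu))) ?_ ?_ ?_ ?_ ?_
      · -- maps into neighborFinset
        intro i hi
        rw [mem_filter] at hi
        rw [mem_neighborFinset]
        rcases mem_iff_ends.mp hi.2 with hw | hw
        · rw [if_pos hw, hw]
          exact hadj_ends i
        · rw [if_neg (fun hc => ends_ne (hnd i) (hc.symm.trans hw)), hw]
          exact (hadj_ends i).symm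
      · -- j maps into filter
        intro u hu
        rw [mem_filter]
        refine ⟨mem_univ _, ?_⟩
        have hspec := Classical.choose_spec (hsurj s((w : V), u)
          (by rw [mem_edgeSet]; exact (mem_neighborFinset _ _ _).mp hu))
        rw [hspec]
        exact Sym2.mem_mk_left _ _
      · -- left inverse
        intro i hi
        rw [mem_filter] at hi
        have hedge : s((w : V), if (w : V) = efst (b i) then esnd (b i) else efst (b i))
            ∈ H.edgeSet := by
          rw [mem_edgeSet]
          rcases mem_iff_ends.mp hi.2 with hw | hw
          · rw [if_pos hw, hw]; exact hadj_ends i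
          · rw [if_neg (fun hc => ends_ne (hnd i) (hc.symm.trans hw)), hw]
            exact (hadj_ends i).symm
        apply hb
        have hspec := Classical.choose_spec (hsurj _ hedge)
        rw [hspec]
        rcases mem_iff_ends.mp hi.2 with hw | hw
        · rw [if_pos hw]
          conv_lhs => rw [hw]
          rw [mk_ends]
        · rw [if_neg (fun hc => ends_ne (hnd i) (hc.symm.trans hw))]
          conv_lhs => rw [hw]
          rw [Sym2.eq_swap, mk_ends]
      · -- right inverse
        intro u hu
        have hadj : H.Adj (w : V) u := (mem_neighborFinset _ _ _).mp hu
        have hspec := Classical.choose_spec (hsurj s((w : V), u)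
          (by rw [mem_edgeSet]; exact hadj))
        have h2 : s(efst s((w:V), u), esnd s((w:V),u)) = s((w : V), u) := mk_ends _
        rw [hspec]
        rw [Sym2.eq_iff] at h2
        rcases h2 with ⟨ha, hbb⟩ | ⟨ha, hbb⟩
        · rw [if_pos ha.symm, hbb]
        · rw [if_neg (by rw [ha]; exact fun hc => hadj.ne hc), ha]
      · -- values agree
        intro i hi
        rw [mem_filter] at hi
        rcases mem_iff_ends.mp hi.2 with hw | hw
        · rw [if_pos hw]
          have hbi : b i = s((w : V), esnd (b i)) := by
            conv_lhs => rw [← mk_ends (b i), ← hw]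
          have hinc : imat v b w i = 1 := by
            show inc (b i) (w : V) = 1
            rw [inc, if_pos hw, if_neg (fun hc => ends_ne (hnd i) (hw.symm.trans hc))]
            ring
          rw [hinc, one_mul]
          show reachInd (H.deleteEdges {b i}) (esnd (b i)) (w' : V)
              - reachInd (H.deleteEdges {b i}) (esnd (b i)) v = _
          rw [← hbi]
        · rw [if_neg (fun hc => ends_ne (hnd i) (hc.symm.trans hw))]
          have hbi : b i = s(efst (b i), (w : V)) := by
            conv_lhs => rw [← mk_ends (b i), ← hw]
          have hinc : imat v b w i = -1 := by
            show inc (b i) (w : V) = -1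
            rw [inc, if_neg (fun hc => ends_ne (hnd i) (hc.symm.trans hw)), if_pos hw]
            ring
          rw [hinc]
          show (-1 : ℤ) * (reachInd (H.deleteEdges {b i}) (esnd (b i)) (w' : V)
              - reachInd (H.deleteEdges {b i}) (esnd (b i)) v) = _
          have hcompl : ∀ x : V,
              reachInd (H.deleteEdges {b i}) (esnd (b i)) x
                = 1 - reachInd (H.deleteEdges {b i}) (efst (b i)) x := by
            intro x
            have h3 := reachInd_add_reachInd hT (hadj_ends i) x
            rw [mk_ends] at h3
            linarith
          rw [hcompl, hcompl]
          have hsw : s((↑w : V), efst (b i)) = b i := by rw [Sym2.eq_swap]; exact hbi.symm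
          conv_rhs => rw [hsw]
          ring
    rw [step1, step2, Finset.sum_sub_distrib, star_sum hT, star_sum hT]
    have hvw : ¬ (v = (w : V)) := fun hc => w.2 hc.symm
    rw [if_neg hvw]
    by_cases h : w = w'
    · subst h
      rw [if_pos rfl]
      simp [Matrix.neg_apply, Matrix.one_apply]
    · rw [if_neg (fun hc => h (Subtype.ext hc.symm))]
      simp [Matrix.neg_apply, Matrix.one_apply, h, Ne.symm h]
  have hdet : det (imat v b) * det M = (-1) ^ Fintype.card {w : V // w ≠ v} := by
    rw [← det_mul, hAM]
    rw [show (-1 : Matrix {w : V // w ≠ v} {w : V // w ≠ v} ℤ) = -(1 : Matrix _ _ ℤ) from rfl,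
      det_neg, det_one, mul_one]
  have h2 : (det (imat v b))^2 * (det M)^2 = 1 := by
    calc (det (imat v b))^2 * (det M)^2
        = (det (imat v b) * det M) * (det (imat v b) * det M) := by ring
      _ = ((-1:ℤ) ^ Fintype.card {w : V // w ≠ v}) * ((-1:ℤ) ^ Fintype.card {w : V // w ≠ v}) := by
          rw [hdet]
      _ = 1 := by rw [← pow_add, ← two_mul, pow_mul]; norm_num
  rcases Int.mul_eq_one_iff_eq_one_or_neg_one.mp h2 with ⟨h3, -⟩ | ⟨h3, -⟩
  · exact h3
  · exfalso
    have := sq_nonneg (det (imat v b))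
    omega

theorem det_imat_eq_zero_of_not_connected (b : {w : V // w ≠ v} → Sym2 V)
    (hmem : ∀ i, b i ∈ H.edgeSet) (hnc : ¬ H.Connected) :
    det (imat v b) = 0 := by
  classical
  have hex : ∃ u, ¬ H.Reachable v u := by
    by_contra hcon
    push_neg at hcon
    haveI : Nonempty V := ⟨v⟩
    exact hnc (SimpleGraph.Connected.mk (fun a c => (hcon a).symm.trans (hcon c)))
  obtain ⟨u, hu⟩ := hex
  have huv : u ≠ v := by rintro rfl; exact hu (Reachable.refl u)
  rw [← Matrix.exists_vecMul_eq_zero_iff]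
  set X : V → ℤ := fun y => if y = v then 0 else reachInd H u y with hX
  refine ⟨fun w => X (w : V), ?_, ?_⟩
  · intro hzero
    have h1 := congrFun hzero ⟨u, huv⟩
    simp only [Pi.zero_apply, hX] at h1
    rw [if_neg huv, reachInd_pos (Reachable.refl u)] at h1
    exact one_ne_zero h1
  · funext i
    show ∑ w : {w : V // w ≠ v}, X (w : V) * imat v b w i = 0
    have hsum : ∑ w : {w : V // w ≠ v}, X (w : V) * inc (b i) (w : V)
        = ∑ y ∈ univ.filter (· ≠ v), X y * inc (b i) y :=
      (Finset.sum_subtype (p := fun y => y ≠ v) (univ.filter (· ≠ v)) (fun y => by simp)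
        (fun y => X y * inc (b i) y)).symm
    have hsum2 : ∑ y ∈ univ.filter (· ≠ v), X y * inc (b i) y
        = ∑ y, X y * inc (b i) y := by
      refine Finset.sum_filter_of_ne fun y _ hne hyv => ?_
      exact hne (by simp [hX, hyv])
    have hXadj : X (efst (b i)) = X (esnd (b i)) := by
      have hadj : H.Adj (efst (b i)) (esnd (b i)) := by
        rw [← mem_edgeSet, mk_ends]; exact hmem i
      simp only [hX]
      by_cases h1 : efst (b i) = v <;> by_cases h2 : esnd (b i) = v
      · rw [if_pos h1, if_pos h2]
      · rw [if_pos h1, if_neg h2]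
        rw [reachInd_neg]
        intro hr
        exact hu (((h1 ▸ hadj : H.Adj v (esnd (b i))).reachable).trans hr.symm)
      · rw [if_neg h1, if_pos h2]
        rw [reachInd_neg]
        intro hr
        exact hu (((h2 ▸ hadj.symm : H.Adj v (efst (b i))).reachable).trans hr.symm)
      · rw [if_neg h1, if_neg h2]
        by_cases hr : H.Reachable u (efst (b i))
        · rw [reachInd_pos hr, reachInd_pos (hr.trans hadj.reachable)]
        · rw [reachInd_neg hr, reachInd_neg
            (fun hr' => hr (hr'.trans hadj.symm.reachable))]
    calc ∑ w : {w : V // w ≠ v}, X (w : V) * imat v b w i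
        = ∑ y, X y * inc (b i) y := by
          rw [show ∑ w : {w : V // w ≠ v}, X (w : V) * imat v b w i
            = ∑ w : {w : V // w ≠ v}, X (w : V) * inc (b i) (w : V) from rfl, hsum, hsum2]
      _ = X (efst (b i)) - X (esnd (b i)) := by
          simp only [inc, mul_sub, mul_ite, mul_one, mul_zero]
          rw [Finset.sum_sub_distrib, Finset.sum_ite_eq' univ (efst (b i)) X,
            Finset.sum_ite_eq' univ (esnd (b i)) X, if_pos (mem_univ _), if_pos (mem_univ _)]
      _ = 0 := by rw [hXadj, sub_self]

/-- Direction sign of an oriented pair relative to the chosen orientation of `e`. -/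
noncomputable def dir (a c : V) (e : Sym2 V) : ℤ :=
  if efst e = a ∧ esnd e = c then 1 else if efst e = c ∧ esnd e = a then -1 else 0

lemma dir_eq_zero {a c : V} {e : Sym2 V} (h : e ≠ s(a, c)) : dir a c e = 0 := by
  rw [dir, if_neg, if_neg]
  · rintro ⟨h1, h2⟩
    exact h (by rw [← mk_ends e, h1, h2, Sym2.eq_swap])
  · rintro ⟨h1, h2⟩
    exact h (by rw [← mk_ends e, h1, h2])

lemma inc_mul_dir {a c : V} (hac : a ≠ c) (x : V) :
    inc s(a,c) x * dir a c s(a,c)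
      = (if x = a then 1 else 0) - (if x = c then 1 else 0) := by
  have h2 : s(efst s(a,c), esnd s(a,c)) = s(a,c) := mk_ends _
  rw [Sym2.eq_iff] at h2
  rcases h2 with ⟨h1, h2⟩ | ⟨h1, h2⟩
  · rw [dir, if_pos ⟨h1, h2⟩, mul_one, inc, h1, h2]
  · rw [dir, if_neg (fun hcon => hac (hcon.1.symm.trans h1)), if_pos ⟨h1, h2⟩, inc, h1, h2]
    by_cases hx1 : x = a <;> by_cases hx2 : x = c <;>
      simp [hx1, hx2] <;> simp_all

lemma list_sum_swap {α β : Type*} [DecidableEq β] (s : Finset β) (f : β → α → ℤ) (l : List α) :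
    ∑ i ∈ s, (l.map (f i)).sum = (l.map (fun a => ∑ i ∈ s, f i a)).sum := by
  induction l with
  | nil => simp
  | cons a t ih => simp [Finset.sum_add_distrib, ih]

lemma list_sum_sub {α : Type*} (l : List α) (f g : α → ℤ) :
    (l.map (fun a => f a - g a)).sum = (l.map f).sum - (l.map g).sum := by
  induction l with
  | nil => simp
  | cons a t ih => simp only [List.map_cons, List.sum_cons, ih]; ring

lemma list_sum_ind (l : List V) (x : V) :
    (l.map (fun a => if x = a then (1:ℤ) else 0)).sum = l.count x := by
  induction l with
  | nil => simp
  | cons a t ih =>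
    rw [List.map_cons, List.sum_cons, ih, List.count_cons]
    by_cases h : x = a
    · subst h
      simp [add_comm]
    · simp [h, Ne.symm h]

lemma list_dropLast_perm_tail : ∀ (l : List V) (hne : l ≠ []),
    l.head hne = l.getLast hne → l.dropLast.Perm l.tail
  | [], h, _ => absurd rfl h
  | [a], _, _ => by simp
  | a :: b :: t, _, h => by
    have hgl : (a :: b :: t).getLast (by simp) = (b :: t).getLast (by simp) :=
      List.getLast_cons (by simp)
    have hh : a = (b :: t).getLast (by simp) := by
      rw [← hgl]; simpa using h
    have hsplit : (b :: t).dropLast ++ [(b :: t).getLast (by simp)] = (b :: t) :=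
      List.dropLast_append_getLast (by simp)
    show ((a :: b :: t).dropLast).Perm (b :: t)
    have hdl : (a :: b :: t).dropLast = a :: (b :: t).dropLast := by
      rw [List.dropLast_cons₂]
    rw [hdl]
    conv_rhs => rw [← hsplit, ← hh]
    exact (List.perm_append_singleton _ _).symm

lemma dropLast_perm_tail {u : V} {H : SimpleGraph V} (c : H.Walk u u) :
    c.support.dropLast.Perm c.support.tail := by
  refine list_dropLast_perm_tail c.support c.support_ne_nil ?_
  have h1 : c.support.head c.support_ne_nil = u := c.head_support
  have h2 : c.support.getLast c.support_ne_nil = u := c.getLast_support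
  rw [h1, h2]

theorem det_imat_eq_zero_of_not_acyclic (b : {w : V // w ≠ v} → Sym2 V)
    (hb : Function.Injective b)
    (hmem : ∀ i, b i ∈ H.edgeSet) (hsurj : ∀ e ∈ H.edgeSet, ∃ i, b i = e)
    (hna : ¬ H.IsAcyclic) :
    det (imat v b) = 0 := by
  classical
  simp only [IsAcyclic, not_forall, not_not] at hna
  obtain ⟨u, c, hc⟩ := hna
  set y : {w : V // w ≠ v} → ℤ :=
    fun i => (c.darts.map (fun d => dir d.fst d.snd (b i))).sum with hy
  rw [← Matrix.exists_mulVec_eq_zero_iff]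
  have hdartedge : ∀ d : H.Dart, d.edge = s(d.fst, d.snd) := fun d => rfl
  refine ⟨y, ?_, ?_⟩
  · -- y ≠ 0
    intro h0
    cases c with
    | nil => exact hc.not_of_nil
    | cons hadj q =>
      rename_i z
      have hedge : s(u, z) ∈ H.edgeSet := hadj
      obtain ⟨i₀, hi₀⟩ := hsurj _ hedge
      have hval := congrFun h0 i₀
      rw [hy] at hval
      simp only [Pi.zero_apply, Walk.darts_cons, List.map_cons, List.sum_cons] at hval
      have hrest : (q.darts.map (fun d => dir d.fst d.snd (b i₀))).sum = 0 := by
        refine List.sum_eq_zero fun x hx => ?_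
        rw [List.mem_map] at hx
        obtain ⟨d, hd, rfl⟩ := hx
        refine dir_eq_zero ?_
        rw [hi₀, ← hdartedge d]
        intro hcon
        have hnodup := hc.edges_nodup
        rw [Walk.edges_cons, List.nodup_cons] at hnodup
        exact hnodup.1 (hcon ▸ List.mem_map_of_mem (f := SimpleGraph.Dart.edge) hd)
      rw [hrest, add_zero] at hval
      have h2 : s(efst s(u,z), esnd s(u,z)) = s(u,z) := mk_ends _
      rw [Sym2.eq_iff] at h2
      have hne : u ≠ z := hadj.ne
      rcases h2 with ⟨ha1, ha2⟩ | ⟨ha1, ha2⟩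
      · rw [hi₀] at hval
        rw [dir, if_pos ⟨ha1, ha2⟩] at hval
        exact one_ne_zero hval
      · rw [hi₀] at hval
        rw [dir, if_neg (fun hcon => hne (hcon.1.symm.trans ha1)), if_pos ⟨ha1, ha2⟩] at hval
        norm_num at hval
  · -- mulVec = 0
    funext w
    show ∑ i, imat v b w i * y i = 0
    have step1 : ∑ i, imat v b w i * y i
        = (c.darts.map (fun d => ∑ i : {w : V // w ≠ v},
            inc (b i) (w : V) * dir d.fst d.snd (b i))).sum := by
      rw [← list_sum_swap]
      refine Finset.sum_congr rfl fun i _ => ?_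
      rw [hy]
      dsimp only
      rw [← List.sum_map_mul_left]
      rfl
    rw [step1]
    have step2 : (c.darts.map (fun d => ∑ i : {w : V // w ≠ v},
            inc (b i) (w : V) * dir d.fst d.snd (b i))).sum
        = (c.darts.map (fun d => (if (w : V) = d.fst then (1:ℤ) else 0)
            - (if (w : V) = d.snd then 1 else 0))).sum := by
      refine congrArg List.sum (List.map_congr_left fun d hd => ?_)
      have hedge : d.edge ∈ H.edgeSet :=
        c.edges_subset_edgeSet (List.mem_map_of_mem (f := SimpleGraph.Dart.edge) hd)
      obtain ⟨i₀, hi₀⟩ := hsurj _ hedge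
      rw [Finset.sum_eq_single i₀]
      · rw [hi₀, hdartedge d]
        exact inc_mul_dir d.adj.ne _
      · intro i _ hne
        rw [dir_eq_zero, mul_zero]
        rw [← hdartedge d, ← hi₀]
        exact fun hcon => hne (hb hcon)
      · intro habs
        exact absurd (mem_univ i₀) habs
    rw [step2, list_sum_sub]
    have hfst : (c.darts.map (fun d => if (w : V) = d.fst then (1:ℤ) else 0)).sum
        = (c.support.dropLast.count (w : V) : ℤ) := by
      rw [show (c.darts.map (fun d => if (w : V) = d.fst then (1:ℤ) else 0))
          = ((c.darts.map (·.fst)).map (fun a => if (w : V) = a then (1:ℤ) else 0)) by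
        rw [List.map_map]; rfl]
      rw [Walk.map_fst_darts, list_sum_ind]
    have hsnd : (c.darts.map (fun d => if (w : V) = d.snd then (1:ℤ) else 0)).sum
        = (c.support.tail.count (w : V) : ℤ) := by
      rw [show (c.darts.map (fun d => if (w : V) = d.snd then (1:ℤ) else 0))
          = ((c.darts.map (·.snd)).map (fun a => if (w : V) = a then (1:ℤ) else 0)) by
        rw [List.map_map]; rfl]
      rw [Walk.map_snd_darts, list_sum_ind]
    rw [hfst, hsnd, (dropLast_perm_tail c).count_eq, sub_self]

end Incidence

end Core

section Main
variable {V : Type*} [DecidableEq V] [Fintype V]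

set_option linter.unusedSectionVars false




variable (G : SimpleGraph V) [DecidableRel G.Adj] (v : V)

/-- The graph spanned by a set of edges of `G`. -/
def graphOf (S : Finset G.edgeSet) : SimpleGraph V :=
  SimpleGraph.fromEdgeSet (↑(S.image (Subtype.val : G.edgeSet → Sym2 V)) : Set (Sym2 V))

lemma graphOf_le (S : Finset G.edgeSet) : graphOf G S ≤ G := by
  refine le_trans (SimpleGraph.fromEdgeSet_mono ?_) (le_of_eq (fromEdgeSet_edgeSet G))
  intro e he
  simp only [coe_image, Set.mem_image, mem_coe] at he
  obtain ⟨x, -, rfl⟩ := he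
  exact x.2

lemma edgeSet_graphOf (S : Finset G.edgeSet) :
    (graphOf G S).edgeSet = ↑(S.image (Subtype.val : G.edgeSet → Sym2 V)) := by
  rw [graphOf, edgeSet_fromEdgeSet]
  ext e
  simp only [Set.mem_diff, Set.mem_setOf_eq, coe_image, Set.mem_image, mem_coe,
    and_iff_left_iff_imp]
  rintro ⟨x, -, rfl⟩
  exact G.not_isDiag_of_mem_edgeSet x.2

theorem main_det :
    ((G.lapMatrix ℝ).submatrix (fun w : {w : V // w ≠ v} => (w : V))
        (fun w : {w : V // w ≠ v} => (w : V))).det =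
      (Nat.card {H : SimpleGraph V // H ≤ G ∧ H.IsTree} : ℝ) := by
  classical
  set W := {w : V // w ≠ v}
  set N : Matrix W G.edgeSet ℤ := imat v (fun e : G.edgeSet => (e : Sym2 V)) with hN
  -- Step 1: the Laplacian minor is N * Nᵀ
  have hlap : (G.lapMatrix ℝ).submatrix (fun w : W => (w : V)) (fun w : W => (w : V))
      = ((N * Nᵀ).map (Int.cast : ℤ → ℝ)) := by
    ext w w'
    have hentry : (N * Nᵀ) w w'
        = (if (w : V) = (w' : V) then (G.degree (w : V) : ℤ) else 0)
          - (if G.Adj (w : V) (w' : V) then 1 else 0) := by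
      rw [mul_apply]
      by_cases h : (w : V) = (w' : V)
      · have hww' : w = w' := Subtype.ext h
        subst hww'
        rw [if_pos rfl, if_neg (G.irrefl), sub_zero]
        have : ∀ e : G.edgeSet, N w e * Nᵀ e w
            = if (w : V) ∈ (e : Sym2 V) then (1:ℤ) else 0 := fun e =>
          inc_sq (G.not_isDiag_of_mem_edgeSet e.2) _
        rw [Finset.sum_congr rfl fun e _ => this e]
        rw [← Finset.sum_subtype (p := fun e => e ∈ G.edgeSet) G.edgeFinset
          (fun e => G.mem_edgeFinset) (fun e => if (w : V) ∈ e then (1:ℤ) else 0)]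
        rw [Finset.sum_boole]
        rw [show G.edgeFinset.filter (fun e => (w : V) ∈ e) = G.incidenceFinset (w : V) by
          ext e
          simp only [mem_filter, mem_incidenceFinset, mem_edgeFinset]
          exact Iff.symm (by exact Iff.rfl)]
        rw [card_incidenceFinset_eq_degree]
      · rw [if_neg h]
        have : ∀ e : G.edgeSet, N w e * Nᵀ e w'
            = -(if (e : Sym2 V) = s((w : V), (w' : V)) then (1:ℤ) else 0) := fun e =>
          inc_mul_inc (G.not_isDiag_of_mem_edgeSet e.2) h
        rw [Finset.sum_congr rfl fun e _ => this e, Finset.sum_neg_distrib]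
        rw [← Finset.sum_subtype (p := fun e => e ∈ G.edgeSet) G.edgeFinset
          (fun e => G.mem_edgeFinset) (fun e => if e = s((w : V), (w' : V)) then (1:ℤ) else 0)]
        rw [Finset.sum_ite_eq' G.edgeFinset s((w : V), (w' : V)) (fun _ => (1:ℤ))]
        rw [zero_sub]
        congr 1
        by_cases hadj : G.Adj (w : V) (w' : V)
        · rw [if_pos hadj, if_pos (by rwa [mem_edgeFinset, mem_edgeSet])]
        · rw [if_neg hadj, if_neg (by rwa [mem_edgeFinset, mem_edgeSet])]
    rw [Matrix.map_apply, hentry]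
    simp only [submatrix_apply, lapMatrix, Matrix.sub_apply, degMatrix, adjMatrix,
      Matrix.diagonal_apply, Matrix.of_apply]
    push_cast
    split_ifs <;> simp
  rw [hlap]
  have hcast : ((N * Nᵀ).map (Int.cast : ℤ → ℝ)).det = (((N * Nᵀ).det : ℤ) : ℝ) := by
    rw [show (N * Nᵀ).map (Int.cast : ℤ → ℝ) = (Int.castRingHom ℝ).mapMatrix (N * Nᵀ) from rfl,
      ← RingHom.map_det]
    rfl
  rw [hcast]
  -- Step 2: Cauchy-Binet
  rw [det_mul_transpose_expand N]
  -- Step 3: evaluate each term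
  have hterm : ∀ S ∈ powersetCard (Fintype.card W) (univ : Finset G.edgeSet),
      (if h : Fintype.card W = S.card then (det (N.submatrix id (enum S h)))^2 else 0)
        = (if (graphOf G S).IsTree then (1:ℤ) else 0) := by
    intro S hS
    have hcard : Fintype.card W = S.card := ((mem_powersetCard_univ).mp hS).symm
    rw [dif_pos hcard]
    set b : W → Sym2 V := fun x => ((enum S hcard x : G.edgeSet) : Sym2 V) with hbdef
    have hsub : N.submatrix id (enum S hcard) = imat v b := rfl
    have hbinj : Function.Injective b :=
      fun a a' ha => enum_injective S hcard (Subtype.ext ha)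
    have hbmem : ∀ i, b i ∈ (graphOf G S).edgeSet := by
      intro i
      rw [edgeSet_graphOf]
      exact mem_coe.mpr (mem_image_of_mem _ (enum_mem S hcard i))
    have hbsurj : ∀ e ∈ (graphOf G S).edgeSet, ∃ i, b i = e := by
      intro e he
      rw [edgeSet_graphOf] at he
      rw [mem_coe, Finset.mem_image] at he
      obtain ⟨x, hx, rfl⟩ := he
      have : x ∈ (univ : Finset W).image (enum S hcard) := by
        rw [enum_image]; exact hx
      rw [Finset.mem_image] at this
      obtain ⟨w, -, rfl⟩ := this
      exact ⟨w, rfl⟩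
    rw [hsub]
    by_cases hT : (graphOf G S).IsTree
    · rw [if_pos hT]
      exact det_imat_sq_of_isTree (graphOf G S) v b hbinj hbmem hbsurj hT
    · rw [if_neg hT]
      rw [isTree_iff] at hT
      push_neg at hT
      by_cases hconn : (graphOf G S).Connected
      · rw [sq, det_imat_eq_zero_of_not_acyclic (graphOf G S) v b hbinj hbmem hbsurj
          (hT hconn), mul_zero]
      · rw [sq, det_imat_eq_zero_of_not_connected (graphOf G S) v b hbmem hconn, mul_zero]
  rw [Finset.sum_congr rfl hterm, Finset.sum_boole]
  set T := (powersetCard (Fintype.card W) (univ : Finset G.edgeSet)).filter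
    (fun S => (graphOf G S).IsTree) with hT
  -- identify the coefficient count with the number of spanning trees
  have hWV : Fintype.card W + 1 = Fintype.card V := by
    have h1 : Fintype.card W = Fintype.card V - 1 := by
      have h0 : Fintype.card {w : V // ¬ (w = v)} = Fintype.card V - 1 := by
        rw [Fintype.card_subtype_compl, Fintype.card_subtype_eq]
      calc Fintype.card W = Fintype.card {w : V // ¬ (w = v)} :=
            Fintype.card_congr (Equiv.subtypeEquivRight (fun _ => Iff.rfl))
        _ = Fintype.card V - 1 := h0
    have h2 : 0 < Fintype.card V := Fintype.card_pos_iff.mpr ⟨v⟩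
    omega
  have key : ∀ (H : SimpleGraph V), H ≤ G →
      graphOf G (H.edgeFinset.subtype (· ∈ G.edgeSet)) = H ∧
      (H.edgeFinset.subtype (· ∈ G.edgeSet)).card = H.edgeFinset.card := by
    intro H hHG
    have himg : (H.edgeFinset.subtype (· ∈ G.edgeSet)).image
        (Subtype.val : G.edgeSet → Sym2 V) = H.edgeFinset := by
      have h1 : (H.edgeFinset.subtype (· ∈ G.edgeSet)).image
          (Subtype.val : G.edgeSet → Sym2 V)
          = (H.edgeFinset.subtype (· ∈ G.edgeSet)).map (Function.Embedding.subtype _) := by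
        rw [Finset.map_eq_image]
        rfl
      rw [h1, Finset.subtype_map]
      refine Finset.filter_true_of_mem fun e he => ?_
      exact edgeSet_mono hHG (mem_edgeFinset.mp he)
    constructor
    · rw [graphOf, himg, coe_edgeFinset, fromEdgeSet_edgeSet]
    · conv_rhs => rw [← himg]
      rw [card_image_of_injective _ Subtype.val_injective]
  have hbij : Nat.card {H : SimpleGraph V // H ≤ G ∧ H.IsTree} = T.card := by
    rw [← Nat.card_eq_finsetCard T]
    refine Nat.card_congr ⟨fun H => ⟨H.1.edgeFinset.subtype (· ∈ G.edgeSet), ?_⟩,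
      fun S => ⟨graphOf G S.1, graphOf_le G S.1, (mem_filter.mp S.2).2⟩, ?_, ?_⟩
    · obtain ⟨H, hHG, hHT⟩ := H
      rw [hT, mem_filter, mem_powersetCard_univ]
      obtain ⟨hkey1, hkey2⟩ := key H hHG
      refine ⟨?_, by rw [hkey1]; exact hHT⟩
      have hcardH := hHT.card_edgeFinset
      rw [hkey2]
      omega
    · rintro ⟨H, hHG, hHT⟩
      exact Subtype.ext ((key H hHG).1)
    · rintro ⟨S, hS⟩
      refine Subtype.ext ?_
      dsimp only
      ext x
      rw [Finset.mem_subtype, mem_edgeFinset, edgeSet_graphOf, mem_coe, Finset.mem_image]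
      constructor
      · rintro ⟨x', hx', hval⟩
        rwa [← Subtype.ext hval]
      · intro hx
        exact ⟨x, hx, rfl⟩
  rw [hbij]
  push_cast
  rfl


end Main

end MTT

/-- Matrix-tree theorem: deleting the row and column of any fixed vertex `v` from the Laplacian
yields a matrix whose determinant equals the number of spanning trees of `G`. -/
theorem det_lapMatrix_minor_eq_card_spanningTrees
    {V : Type*} [Fintype V] [DecidableEq V] (G : SimpleGraph V) [DecidableRel G.Adj]
    (v : V) :
    ((G.lapMatrix ℝ).submatrix (fun w : {w : V // w ≠ v} => (w : V))
        (fun w : {w : V // w ≠ v} => (w : V))).det =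
      (Nat.card {H : SimpleGraph V // H ≤ G ∧ H.IsTree} : ℝ) := by
  exact MTT.main_det G v
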